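/- For every real number a with |a| < 1 and every natural number n, (1/(2π)) ∫₀^{2π} cos(nω)/(1 − 2a·cos ω + a²) dω = aⁿ/(1 − a²). -/

import Mathlib

open Real intervalIntegral

open MeasureTheory in
private lemma cosZ (m : ℤ) :
    ∫ ω in (0:ℝ)..(2 * π), Real.cos (m * ω) = if m = 0 then 2 * π else 0 := by
  rcases eq_or_ne m 0 with hm | hm
  · simp [hm, two_mul]
  · simp only [hm, if_false]
    have h := intervalIntegral.mul_integral_comp_mul_left (a := (0:ℝ)) (b := 2 * π)
      (f := Real.cos) (c := (m:ℝ))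
    rw [integral_cos] at h
    have hs : Real.sin ((m:ℝ) * (2 * π)) = 0 := by
      have : (m:ℝ) * (2 * π) = (2 * m : ℤ) * π := by push_cast; ring
      rw [this, Real.sin_int_mul_pi]
    have hm' : (m:ℝ) ≠ 0 := Int.cast_ne_zero.mpr hm
    rw [mul_zero, hs, Real.sin_zero, sub_zero] at h
    exact (mul_eq_zero.mp h).resolve_left hm'

private lemma two_cos_mul_cos (x y : ℝ) :
    2 * (Real.cos x * Real.cos y) = Real.cos (x - y) + Real.cos (x + y) := by
  rw [Real.cos_sub, Real.cos_add]; ring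

theorem stmt_0 (a : ℝ) (ha : |a| < 1) (n : ℕ) :
    (1 / (2 * π)) * ∫ ω in (0:ℝ)..(2 * π),
      Real.cos (n * ω) / (1 - 2 * a * Real.cos ω + a ^ 2)
    = a ^ n / (1 - a ^ 2) := by
  have ha1 : -1 < a := by cases abs_lt.mp ha; assumption
  have ha2 : a < 1 := by cases abs_lt.mp ha; assumption
  have hasq : a ^ 2 < 1 := by nlinarith
  have hD : ∀ ω : ℝ, 0 < 1 - 2 * a * Real.cos ω + a ^ 2 := by
    intro ω
    nlinarith [Real.neg_one_le_cos ω, Real.cos_le_one ω, sq_nonneg (a - Real.cos ω),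
      Real.sin_sq_add_cos_sq ω, sq_nonneg (Real.sin ω)]
  -- geometric series giving the Poisson kernel
  have hgeom : ∀ ω : ℝ, HasSum (fun k : ℕ => a ^ k * Real.cos (k * ω))
      ((1 - a * Real.cos ω) / (1 - 2 * a * Real.cos ω + a ^ 2)) := by
    intro ω
    set z : ℂ := (a : ℂ) * Complex.exp (ω * Complex.I) with hz
    have hnz : ‖z‖ < 1 := by
      rw [hz, norm_mul, Complex.norm_exp]
      simp [Complex.norm_real, abs_lt.mpr ⟨ha1, ha2⟩, ha]
    have hg := (hasSum_geometric_of_norm_lt_one hnz).mapL Complex.reCLM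
    have hre : ∀ k : ℕ, Complex.reCLM (z ^ k) = a ^ k * Real.cos (k * ω) := by
      intro k
      have : z ^ k = ((a ^ k : ℝ) : ℂ) * Complex.exp ((k * ω : ℝ) * Complex.I) := by
        rw [hz, mul_pow, ← Complex.exp_nat_mul]
        push_cast; ring_nf
      simp only [Complex.reCLM_apply, this, Complex.re_ofReal_mul,
        Complex.exp_ofReal_mul_I_re]
    have hval : Complex.reCLM (1 - z)⁻¹
        = (1 - a * Real.cos ω) / (1 - 2 * a * Real.cos ω + a ^ 2) := by
      have hrez : z.re = a * Real.cos ω := by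
        rw [hz]
        simpa using Complex.re_ofReal_mul a (Complex.exp (ω * Complex.I))
      have himz : z.im = a * Real.sin ω := by
        rw [hz]
        have := Complex.im_ofReal_mul a (Complex.exp (ω * Complex.I))
        simpa [Complex.exp_ofReal_mul_I_im] using this
      have hns : Complex.normSq (1 - z) = 1 - 2 * a * Real.cos ω + a ^ 2 := by
        rw [Complex.normSq_apply]
        simp only [Complex.sub_re, Complex.sub_im, Complex.one_re, Complex.one_im,
          hrez, himz]
        nlinarith [Real.sin_sq_add_cos_sq ω]
      rw [Complex.reCLM_apply, Complex.inv_re, hns]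
      simp [hrez]
    rw [funext hre, hval] at hg
    exact hg
  set D : ℝ → ℝ := fun ω => 1 - 2 * a * Real.cos ω + a ^ 2 with hDdef
  set F : ℕ → ℝ → ℝ := fun k ω =>
    (if k = 0 then 1 else 2 * a ^ k * Real.cos (k * ω)) * Real.cos (n * ω) with hFdef
  -- pointwise sum
  have hsum : ∀ ω : ℝ, HasSum (fun k => F k ω)
      ((1 - a ^ 2) * Real.cos (n * ω) / D ω) := by
    intro ω
    have h1 := (hgeom ω).mul_left 2
    have h2 : HasSum (fun k : ℕ => if k = 0 then (1:ℝ) else 0) 1 := hasSum_ite_eq 0 1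
    have h3 := h1.sub h2
    have heq : (fun k : ℕ => 2 * (a ^ k * Real.cos (k * ω)) - if k = 0 then (1:ℝ) else 0)
        = fun k : ℕ => if k = 0 then 1 else 2 * a ^ k * Real.cos (k * ω) := by
      funext k
      rcases eq_or_ne k 0 with hk | hk <;> simp [hk] <;> ring
    rw [heq] at h3
    have hval : 2 * ((1 - a * Real.cos ω) / D ω) - 1 = (1 - a ^ 2) / D ω := by
      have hDne : (1 - 2 * a * Real.cos ω + a ^ 2) ≠ 0 := (hD ω).ne'
      simp only [hDdef]
      field_simp
      ring
    rw [hval] at h3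
    have := h3.mul_right (Real.cos (n * ω))
    simpa [div_mul_eq_mul_div, hFdef] using this
  -- termwise integrals
  have hFcont : ∀ k, Continuous (F k) := by
    intro k
    rcases eq_or_ne k 0 with hk | hk
    · have : F k = fun ω => Real.cos (n * ω) := by
        funext ω; simp [hFdef, hk]
      rw [this]; fun_prop
    · have : F k = fun ω => 2 * a ^ k * Real.cos (k * ω) * Real.cos (n * ω) := by
        funext ω; simp [hFdef, hk]
      rw [this]; fun_prop
  have hintF : ∀ k : ℕ, (∫ ω in (0:ℝ)..(2 * π), F k ω)
      = if k = n then 2 * π * a ^ n else 0 := by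
    intro k
    rcases eq_or_ne k 0 with hk | hk
    · subst hk
      have : (∫ ω in (0:ℝ)..(2 * π), F 0 ω) = ∫ ω in (0:ℝ)..(2 * π), Real.cos ((n:ℤ) * ω) := by
        apply intervalIntegral.integral_congr; intro ω _
        simp [hFdef]
      rw [this, cosZ]
      rcases eq_or_ne n 0 with hn | hn <;> simp [hn, eq_comm]
    · have heq : ∀ ω, F k ω = a ^ k *
          (Real.cos ((((k:ℤ) - (n:ℤ) : ℤ) : ℝ) * ω) + Real.cos ((((k:ℤ) + (n:ℤ) : ℤ) : ℝ) * ω)) := by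
        intro ω
        have h := two_cos_mul_cos ((k:ℝ) * ω) ((n:ℝ) * ω)
        rw [hFdef]
        simp only [if_neg hk]
        push_cast
        rw [sub_mul, add_mul]
        linear_combination a ^ k * h
      rw [intervalIntegral.integral_congr (fun ω _ => heq ω),
        intervalIntegral.integral_const_mul, intervalIntegral.integral_add
          ((Continuous.intervalIntegrable (by fun_prop) _ _))
          ((Continuous.intervalIntegrable (by fun_prop) _ _)), cosZ, cosZ]
      have hkn : (k:ℤ) + n ≠ 0 := by positivity
      rcases eq_or_ne k n with h | h
      · subst h
        simp only [sub_self, if_true, if_neg hkn, add_zero]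
        ring
      · have : (k:ℤ) - n ≠ 0 := sub_ne_zero.mpr (by exact_mod_cast h)
        simp [this, hkn, h]
  -- exchange sum and integral
  have h2pi : (0:ℝ) ≤ 2 * π := by positivity
  have hmain : (∫ ω in (0:ℝ)..(2 * π), (1 - a ^ 2) * Real.cos (n * ω) / D ω)
      = 2 * π * a ^ n := by
    rw [intervalIntegral.integral_of_le h2pi]
    have hInt : ∀ k : ℕ, MeasureTheory.Integrable (F k)
        (MeasureTheory.volume.restrict (Set.Ioc 0 (2 * π))) := fun k =>
      (hFcont k).integrableOn_Ioc
    have hbound : ∀ k ω, ‖F k ω‖ ≤ 2 * |a| ^ k := by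
      intro k ω
      rw [hFdef]
      rcases eq_or_ne k 0 with hk | hk
      · simp only [hk, if_true, one_mul, Real.norm_eq_abs, pow_zero, mul_one]
        calc |Real.cos (n * ω)| ≤ 1 := Real.abs_cos_le_one _
        _ ≤ 2 := by norm_num
      · simp only [if_neg hk, Real.norm_eq_abs, abs_mul, abs_two, abs_pow]
        nlinarith [Real.abs_cos_le_one ((k:ℝ) * ω), Real.abs_cos_le_one ((n:ℝ) * ω),
          abs_nonneg (Real.cos ((k:ℝ) * ω)), abs_nonneg (Real.cos ((n:ℝ) * ω)),
          pow_nonneg (abs_nonneg a) k,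
          mul_nonneg (pow_nonneg (abs_nonneg a) k) (abs_nonneg (Real.cos ((k:ℝ) * ω)))]
    have hnormint : ∀ k : ℕ, (∫ ω in Set.Ioc (0:ℝ) (2 * π), ‖F k ω‖)
        ≤ 2 * |a| ^ k * (2 * π) := by
      intro k
      have step1 : (∫ ω in Set.Ioc (0:ℝ) (2 * π), ‖F k ω‖)
          ≤ ∫ _ in Set.Ioc (0:ℝ) (2 * π), 2 * |a| ^ k :=
        MeasureTheory.integral_mono (hInt k).norm
          (MeasureTheory.integrable_const _) (fun ω => hbound k ω)
      have step2 : (∫ _ in Set.Ioc (0:ℝ) (2 * π), (2 * |a| ^ k : ℝ))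
          = 2 * |a| ^ k * (2 * π) := by
        rw [MeasureTheory.setIntegral_const]
        rw [MeasureTheory.measureReal_def, Real.volume_Ioc]
        rw [sub_zero, ENNReal.toReal_ofReal h2pi]
        simp [mul_comm]
      linarith [step1, step2.le, step2.ge]
    have hSummable : Summable fun k : ℕ =>
        ∫ ω in Set.Ioc (0:ℝ) (2 * π), ‖F k ω‖ := by
      apply Summable.of_nonneg_of_le
        (fun k => MeasureTheory.integral_nonneg (fun ω => norm_nonneg _)) hnormint
      exact ((summable_geometric_of_lt_one (abs_nonneg a) ha).mul_left 2).mul_right (2 * π)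
    have hHS := MeasureTheory.hasSum_integral_of_summable_integral_norm hInt hSummable
    have htsum : ∀ ω : ℝ, (∑' k, F k ω) = (1 - a ^ 2) * Real.cos (n * ω) / D ω :=
      fun ω => (hsum ω).tsum_eq
    simp only [htsum] at hHS
    have hHS2 : HasSum (fun k : ℕ => ∫ ω in Set.Ioc (0:ℝ) (2 * π), F k ω)
        (2 * π * a ^ n) := by
      have : (fun k : ℕ => ∫ ω in Set.Ioc (0:ℝ) (2 * π), F k ω)
          = fun k : ℕ => if k = n then 2 * π * a ^ n else 0 := by
        funext k
        rw [← intervalIntegral.integral_of_le h2pi, hintF k]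
      rw [this]
      exact hasSum_ite_eq n _
    exact hHS.unique hHS2
  -- conclude
  have hD2 : (0:ℝ) < 1 - a ^ 2 := by nlinarith
  have hfinal : (∫ ω in (0:ℝ)..(2 * π),
      Real.cos (n * ω) / (1 - 2 * a * Real.cos ω + a ^ 2)) = 2 * π * a ^ n / (1 - a ^ 2) := by
    have heq : ∀ ω, Real.cos (n * ω) / (1 - 2 * a * Real.cos ω + a ^ 2)
        = (1 / (1 - a ^ 2)) * ((1 - a ^ 2) * Real.cos (n * ω) / D ω) := by
      intro ω
      rw [hDdef]
      field_simp
    rw [intervalIntegral.integral_congr (fun ω _ => heq ω),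
      intervalIntegral.integral_const_mul, hmain]
    ring
  rw [hfinal]
  have hπ : π ≠ 0 := Real.pi_ne_zero
  field_simp
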